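/- Let $d \geq 1$ and let $\mathcal{R}$ be a finite collection of $d$-dimensional integer boxes. Suppose that for every partition $\mathcal{R} = A_1 \sqcup \cdots \sqcup A_d$ (with some parts possibly empty), there exists $1 \leq j \leq d$ with $\gcd(n_j(R) : R \in A_j) = 1$. Then there exists $k_0 \in \mathbb{N}$ such that every box $R_\ell$ with all sidelengths $\ell_1, \ldots, \ell_d \geq k_0$ can be tiled by translates of boxes from $\mathcal{R}$. -/

import Mathlib

/-- The translate by `s` of the box with sidelength vector `n`, as a set of points
of `ℕ^d`. -/
def translBox {d : ℕ} (n : Fin d → ℕ) (s : Fin d → ℕ) : Set (Fin d → ℕ) :=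
  {p | ∀ j, s j ≤ p j ∧ p j < s j + n j}

/-- The box of sidelengths `ℓ` based at the origin. -/
def boxSet {d : ℕ} (ℓ : Fin d → ℕ) : Set (Fin d → ℕ) :=
  {p | ∀ j, p j < ℓ j}

/-- The box `boxSet ℓ` is tiled by translates of the boxes `R i`, `i : Fin k`: there is a
set `T` of (box index, translation) pairs with each translated box contained in `boxSet ℓ`
and every point of `boxSet ℓ` covered by exactly one translated box. -/
def TiledByBoxes {d k : ℕ} (R : Fin k → Fin d → ℕ) (ℓ : Fin d → ℕ) : Prop :=
  ∃ T : Set (Fin k × (Fin d → ℕ)),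
    (∀ t ∈ T, translBox (R t.1) t.2 ⊆ boxSet ℓ) ∧
    ∀ p ∈ boxSet ℓ, ∃! t : Fin k × (Fin d → ℕ),
      t ∈ T ∧ p ∈ translBox (R t.1) t.2

variable {d k : ℕ} {R : Fin k → Fin d → ℕ}

lemma mem_translBox {n s p : Fin d → ℕ} :
    p ∈ translBox n s ↔ ∀ j, s j ≤ p j ∧ p j < s j + n j := Iff.rfl

lemma mem_boxSet {ℓ p : Fin d → ℕ} : p ∈ boxSet ℓ ↔ ∀ j, p j < ℓ j := Iff.rfl

lemma tiled_of_zero (ℓ : Fin d → ℕ) (j₀ : Fin d) (h : ℓ j₀ = 0) : TiledByBoxes R ℓ := by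
  refine ⟨∅, by simp, fun p hp => absurd (hp j₀) (by simp [h])⟩

lemma tiled_grid (i : Fin k) (ℓ : Fin d → ℕ) (hdvd : ∀ j, R i j ∣ ℓ j)
    (hpos : ∀ j, 0 < R i j) : TiledByBoxes R ℓ := by
  refine ⟨{t | t.1 = i ∧ ∀ j, R i j ∣ t.2 j ∧ t.2 j + R i j ≤ ℓ j}, ?_, ?_⟩
  · rintro ⟨i', s⟩ ⟨h1, hs⟩ p hp
    simp only at h1; subst h1
    exact fun j => by have := (mem_translBox.1 hp) j; have := (hs j).2; simp only at *; omega
  · intro p hp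
    have key : ∀ j, p j / R i j * R i j + R i j ≤ ℓ j := by
      intro j
      have h1 : p j / R i j < ℓ j / R i j := Nat.div_lt_div_of_lt_of_dvd (hdvd j) (hp j)
      have h2 : (p j / R i j + 1) * R i j ≤ ℓ j / R i j * R i j :=
        Nat.mul_le_mul_right _ h1
      rw [Nat.div_mul_cancel (hdvd j), Nat.succ_mul] at h2
      exact h2
    refine ⟨⟨i, fun j => p j / R i j * R i j⟩,
      ⟨⟨rfl, fun j => ⟨dvd_mul_left _ _, key j⟩⟩, fun j => ?_⟩, ?_⟩
    · refine ⟨Nat.div_mul_le_self _ _, ?_⟩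
      have e1 : p j / R i j * R i j + p j % R i j = p j := Nat.div_add_mod' _ _
      have e2 : p j % R i j < R i j := Nat.mod_lt _ (hpos j)
      simp only
      omega
    · rintro ⟨i', s⟩ ⟨⟨h1, hs⟩, hmem⟩
      simp only at h1; subst h1
      simp only [Prod.mk.injEq, true_and]
      funext j
      obtain ⟨c, hc⟩ := (hs j).1
      have hm := (mem_translBox.1 hmem) j
      simp only at hm hc
      have e3 : (c + 1) * R i' j = R i' j * c + R i' j := by ring
      have hq : p j / R i' j = c :=
        Nat.div_eq_of_lt_le (by rw [Nat.mul_comm]; omega) (by omega)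
      rw [hq, hc, Nat.mul_comm]

lemma tiled_stack (j₀ : Fin d) (ℓ : Fin d → ℕ) (a b : ℕ)
    (h₁ : TiledByBoxes R (Function.update ℓ j₀ a))
    (h₂ : TiledByBoxes R (Function.update ℓ j₀ b)) :
    TiledByBoxes R (Function.update ℓ j₀ (a + b)) := by
  obtain ⟨T₁, hT₁, hU₁⟩ := h₁
  obtain ⟨T₂, hT₂, hU₂⟩ := h₂
  classical
  set σ : (Fin k × (Fin d → ℕ)) → (Fin k × (Fin d → ℕ)) :=
    fun t => (t.1, Function.update t.2 j₀ (t.2 j₀ + a)) with hσ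
  have σinj : Function.Injective σ := by
    rintro ⟨i, s⟩ ⟨i', s'⟩ h
    simp only [hσ, Prod.mk.injEq] at h
    obtain ⟨rfl, h2⟩ := h
    simp only [Prod.mk.injEq, true_and]
    funext j
    have := congrFun h2 j
    by_cases hj : j = j₀
    · subst hj; simpa using this
    · simpa [Function.update_apply, hj] using this
  -- membership in translated box through σ
  have hmemσ : ∀ (t : Fin k × (Fin d → ℕ)) (p : Fin d → ℕ), a ≤ p j₀ →
      (p ∈ translBox (R t.1) (σ t).2 ↔
        Function.update p j₀ (p j₀ - a) ∈ translBox (R t.1) t.2) := by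
    intro t p hap
    constructor
    · intro h j
      have hj' := h j
      by_cases hj : j = j₀
      · subst hj; simp only [hσ, Function.update_self] at hj' ⊢; omega
      · simpa [hσ, Function.update_of_ne hj] using hj'
    · intro h j
      have hj' := h j
      by_cases hj : j = j₀
      · subst hj; simp only [hσ, Function.update_self] at hj' ⊢; omega
      · simpa [hσ, Function.update_of_ne hj] using hj'
  have hlowσ : ∀ t ∈ T₂, ∀ p ∈ translBox (R t.1) (σ t).2, a ≤ p j₀ := by
    intro t ht p hp
    have := hp j₀
    simp only [hσ, Function.update_self] at this
    omega
  refine ⟨T₁ ∪ σ '' T₂, ?_, ?_⟩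
  · rintro t (ht | ⟨t', ht', rfl⟩) p hp
    · intro j
      have := hT₁ t ht hp j
      by_cases hj : j = j₀
      · subst hj; simp only [Function.update_self] at this ⊢; omega
      · simpa [Function.update_of_ne hj] using this
    · have hap : a ≤ p j₀ := hlowσ t' ht' p hp
      have hq := hT₂ t' ht' ((hmemσ t' p hap).1 hp)
      intro j
      have := hq j
      by_cases hj : j = j₀
      · subst hj; simp only [Function.update_self] at this ⊢; omega
      · simpa [Function.update_of_ne hj] using this
  · intro p hp
    by_cases hcase : p j₀ < a
    · have hp₁ : p ∈ boxSet (Function.update ℓ j₀ a) := by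
        intro j
        have := hp j
        by_cases hj : j = j₀
        · subst hj; simpa using hcase
        · simpa [Function.update_of_ne hj] using this
      obtain ⟨t, ⟨htT, htp⟩, huniq⟩ := hU₁ p hp₁
      refine ⟨t, ⟨Or.inl htT, htp⟩, ?_⟩
      rintro t' ⟨(ht' | ⟨t'', ht'', rfl⟩), hp'⟩
      · exact huniq t' ⟨ht', hp'⟩
      · exact absurd (hlowσ t'' ht'' p hp') (by omega)
    · push_neg at hcase
      set q : Fin d → ℕ := Function.update p j₀ (p j₀ - a) with hqdef
      have hq₂ : q ∈ boxSet (Function.update ℓ j₀ b) := by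
        intro j
        have := hp j
        by_cases hj : j = j₀
        · subst hj; simp only [hqdef, Function.update_self] at this ⊢; omega
        · simp only [hqdef, Function.update_of_ne hj] at this ⊢; exact this
      obtain ⟨t, ⟨htT, htq⟩, huniq⟩ := hU₂ q hq₂
      refine ⟨σ t, ⟨Or.inr ⟨t, htT, rfl⟩, (hmemσ t p hcase).2 htq⟩, ?_⟩
      rintro t' ⟨(ht' | ⟨t'', ht'', rfl⟩), hp'⟩
      · -- t' ∈ T₁ covers p, but then p j₀ < a
        have := hT₁ t' ht' hp' j₀
        simp only [Function.update_self] at this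
        omega
      · have : t'' = t := huniq t'' ⟨ht'', (hmemσ t'' p hcase).1 hp'⟩
        rw [this]


lemma exists_diff_gcd (s : Finset ℕ) :
    ∃ A B : ℕ, A ∈ AddSubmonoid.closure (s : Set ℕ) ∧ B ∈ AddSubmonoid.closure (s : Set ℕ) ∧
      A = B + s.gcd id := by
  classical
  induction s using Finset.induction_on with
  | empty => exact ⟨0, 0, zero_mem _, zero_mem _, by simp⟩
  | @insert a s ha ih =>
    obtain ⟨A, B, hA, hB, hAB⟩ := ih
    have hsub : AddSubmonoid.closure (s : Set ℕ) ≤ AddSubmonoid.closure ((insert a s : Finset ℕ) : Set ℕ) := by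
      apply AddSubmonoid.closure_mono
      intro x hx; simp only [Finset.coe_insert, Set.mem_insert_iff]; exact Or.inr hx
    have hain : a ∈ AddSubmonoid.closure ((insert a s : Finset ℕ) : Set ℕ) :=
      AddSubmonoid.subset_closure (by simp)
    rw [Finset.gcd_insert]
    simp only [id_eq]
    have hgcdeq : GCDMonoid.gcd a (s.gcd id) = Nat.gcd a (s.gcd id) := rfl
    rw [hgcdeq]
    set g := s.gcd id with hg
    rcases Nat.eq_zero_or_pos g with hg0 | hgpos
    · rw [hg0, Nat.gcd_zero_right]
      exact ⟨a, 0, hain, zero_mem _, by simp⟩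
    rcases Nat.eq_zero_or_pos a with ha0 | hapos
    · subst ha0; rw [Nat.gcd_zero_left]
      exact ⟨A, B, hsub hA, hsub hB, hAB⟩
    obtain ⟨u, v, huv⟩ : ∃ u v : ℕ, u * a = v * g + Nat.gcd a g := by
      have hbez := Nat.gcd_eq_gcd_ab a g
      set x := Nat.gcdA a g with hx
      set u : ℕ := (x % (g : ℤ)).toNat + g with hu
      have hgz : (g:ℤ) ≠ 0 := by exact_mod_cast hgpos.ne'
      have hxmod : (0:ℤ) ≤ x % (g:ℤ) := Int.emod_nonneg x hgz
      have hucast : (u : ℤ) = x % (g:ℤ) + g := by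
        push_cast [hu, Int.toNat_of_nonneg hxmod]; ring
      have h1 : (g:ℤ) ∣ ((u:ℤ) - x) := by
        rw [hucast, Int.emod_def]
        exact ⟨1 - x / g, by ring⟩
      have h2 : (u:ℤ) * a - (Nat.gcd a g : ℤ) = ((u:ℤ) - x) * a - (g:ℤ) * Nat.gcdB a g := by
        rw [hbez]; ring
      have hdvdZ : (g:ℤ) ∣ ((u:ℤ) * a - (Nat.gcd a g : ℤ)) := by
        rw [h2]
        exact dvd_sub (h1.mul_right a) (Dvd.intro _ rfl)
      have hge : Nat.gcd a g ≤ u * a := by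
        have h3 : Nat.gcd a g ≤ a := Nat.le_of_dvd hapos (Nat.gcd_dvd_left a g)
        have h4 : 1 ≤ u := le_trans hgpos (by rw [hu]; exact Nat.le_add_left g _)
        calc Nat.gcd a g ≤ a := h3
          _ = 1 * a := (one_mul a).symm
          _ ≤ u * a := Nat.mul_le_mul_right a h4
      have hdvdN : g ∣ (u * a - Nat.gcd a g) := by
        have hcast : ((u * a - Nat.gcd a g : ℕ) : ℤ) = (u:ℤ) * a - (Nat.gcd a g : ℤ) := by
          push_cast [Nat.cast_sub hge]; ring
        exact_mod_cast (hcast ▸ hdvdZ : (g:ℤ) ∣ ((u * a - Nat.gcd a g : ℕ) : ℤ))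
      refine ⟨u, (u * a - Nat.gcd a g) / g, ?_⟩
      have := Nat.div_mul_cancel hdvdN
      omega
    refine ⟨u * a + v * B, v * A, ?_, ?_, ?_⟩
    · exact add_mem (by simpa [nsmul_eq_mul] using nsmul_mem hain u)
        (by simpa [nsmul_eq_mul] using nsmul_mem (hsub hB) v)
    · simpa [nsmul_eq_mul] using nsmul_mem (hsub hA) v
    · have : v * A = v * B + v * g := by rw [hAB]; ring
      omega

lemma frobenius_closure (s : Finset ℕ) (h : s.gcd id = 1) :
    ∃ N : ℕ, ∀ n : ℕ, N ≤ n → n ∈ AddSubmonoid.closure (s : Set ℕ) := by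
  obtain ⟨A, B, hA, hB, hAB⟩ := exists_diff_gcd s
  rw [h] at hAB
  rcases Nat.eq_zero_or_pos B with hB0 | hBpos
  · refine ⟨0, fun n _ => ?_⟩
    have hA1 : A = 1 := by omega
    have : n • A ∈ AddSubmonoid.closure (s : Set ℕ) := nsmul_mem hA n
    simpa [hA1, nsmul_eq_mul] using this
  · refine ⟨B * B, fun n hn => ?_⟩
    set q := n / B with hq
    set r := n % B with hr
    have hrB : r < B := Nat.mod_lt _ hBpos
    have hqB : B ≤ q := (Nat.le_div_iff_mul_le hBpos).2 hn
    have h1 : n = q * B + r := by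
      rw [hq, hr, Nat.mul_comm]
      exact (Nat.div_add_mod n B).symm
    have hn' : n = (q - r) * B + r * A := by
      have h2 : (q - r) * B = q * B - r * B := Nat.sub_mul q r B
      have h3 : r * A = r * B + r := by rw [hAB]; ring
      have h4 : r * B ≤ q * B := Nat.mul_le_mul_right _ (by omega)
      omega
    rw [hn']
    exact add_mem (by simpa [nsmul_eq_mul] using nsmul_mem hB (q - r))
      (by simpa [nsmul_eq_mul] using nsmul_mem hA r)

lemma prime_dvd_lcm {ι : Type*} {p : ℕ} (hp : p.Prime) (s : Finset ι) (f : ι → ℕ)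
    (h : p ∣ s.lcm f) : ∃ i ∈ s, p ∣ f i := by
  classical
  induction s using Finset.induction_on with
  | empty => exact absurd (Nat.dvd_one.1 (by simpa using h)) hp.ne_one
  | @insert a s ha ih =>
    rw [Finset.lcm_insert] at h
    have hd : p ∣ f a * s.lcm f := h.trans (Nat.lcm_dvd (dvd_mul_right _ _) (dvd_mul_left _ _))
    rcases (Nat.Prime.dvd_mul hp).1 hd with h1 | h1
    · exact ⟨a, Finset.mem_insert_self _ _, h1⟩
    · obtain ⟨i, hi, hpi⟩ := ih h1
      exact ⟨i, Finset.mem_insert_of_mem hi, hpi⟩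

def Hyp {d k : ℕ} (R : Fin k → Fin d → ℕ) (S : Finset (Fin k)) (J : Finset (Fin d)) : Prop :=
  ∀ P : Fin k → Fin d, (∀ i ∈ S, P i ∈ J) → ∃ j ∈ J,
    (S.filter (fun i => P i = j)).gcd (fun i => R i j) = 1

section main
variable {d k : ℕ} {R : Fin k → Fin d → ℕ}

lemma base_case (hd : 0 < d) (hpos : ∀ i j, 0 < R i j) (S : Finset (Fin k))
    (h : Hyp R S ∅) :
    ∃ N : ℕ, ∀ ℓ : Fin d → ℕ, (∀ j ∈ (∅ : Finset (Fin d)), N ≤ ℓ j) →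
      (∀ j ∉ (∅ : Finset (Fin d)), (S.lcm fun i => R i j) ∣ ℓ j) → TiledByBoxes R ℓ := by
  rcases S.eq_empty_or_nonempty with rfl | ⟨i₀, hi₀⟩
  · obtain ⟨j, hj, -⟩ := h (fun _ => ⟨0, hd⟩) (by simp)
    exact absurd hj (by simp)
  · refine ⟨0, fun ℓ _ hdvd => ?_⟩
    exact tiled_grid i₀ ℓ
      (fun j => (Finset.dvd_lcm hi₀).trans (hdvd j (by simp)))
      (fun j => hpos i₀ j)

lemma main_induction (hd : 0 < d) (hpos : ∀ i j, 0 < R i j) :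
    ∀ (n : ℕ) (J : Finset (Fin d)), J.card ≤ n → ∀ S : Finset (Fin k), Hyp R S J →
    ∃ N : ℕ, ∀ ℓ : Fin d → ℕ, (∀ j ∈ J, N ≤ ℓ j) →
      (∀ j ∉ J, (S.lcm fun i => R i j) ∣ ℓ j) → TiledByBoxes R ℓ := by
  intro n
  induction n with
  | zero =>
    intro J hJ S hS
    rw [Finset.card_eq_zero.1 (Nat.le_zero.1 hJ)] at hS ⊢
    exact base_case hd hpos S hS
  | succ n IH =>
    intro J hJcard S hS
    classical
    rcases J.eq_empty_or_nonempty with rfl | ⟨j₀, hj₀⟩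
    · exact base_case hd hpos S hS
    set J' := J.erase j₀ with hJ'
    have hJ'card : J'.card ≤ n := by
      have h0 : 0 < J.card := Finset.card_pos.2 ⟨j₀, hj₀⟩
      have h1 : J'.card = J.card - 1 := by rw [hJ']; exact Finset.card_erase_of_mem hj₀
      omega
    -- dichotomy
    have dich : ∀ S' ⊆ S, ¬ Hyp R S' J' → ((S \ S').gcd fun i => R i j₀) = 1 := by
      intro S' hS'sub hnot
      rw [Hyp] at hnot
      push_neg at hnot
      obtain ⟨P', hP'1, hP'2⟩ := hnot
      set P : Fin k → Fin d := fun i => if i ∈ S' then P' i else j₀ with hP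
      obtain ⟨j, hjJ, hj1⟩ := hS P (by
        intro i hi
        by_cases hiS' : i ∈ S'
        · simp only [hP, if_pos hiS']
          exact Finset.mem_of_mem_erase (hP'1 i hiS')
        · simp only [hP, if_neg hiS']
          exact hj₀)
      by_cases hjj : j = j₀
      · subst hjj
        have hfe : S.filter (fun i => P i = j) = S \ S' := by
          ext i
          simp only [Finset.mem_filter, Finset.mem_sdiff]
          constructor
          · rintro ⟨hiS, hPi⟩
            refine ⟨hiS, fun hiS' => ?_⟩
            rw [hP] at hPi
            simp only [if_pos hiS'] at hPi
            exact Finset.ne_of_mem_erase (hP'1 i hiS') hPi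
          · rintro ⟨hiS, hiS'⟩
            exact ⟨hiS, by simp [hP, if_neg hiS']⟩
        rwa [hfe] at hj1
      · have hjJ' : j ∈ J' := Finset.mem_erase.2 ⟨hjj, hjJ⟩
        exfalso
        apply hP'2 j hjJ'
        have hfe : S.filter (fun i => P i = j) = S'.filter (fun i => P' i = j) := by
          ext i
          simp only [Finset.mem_filter]
          constructor
          · rintro ⟨hiS, hPi⟩
            by_cases hiS' : i ∈ S'
            · rw [hP] at hPi; simp only [if_pos hiS'] at hPi; exact ⟨hiS', hPi⟩
            · rw [hP] at hPi; simp only [if_neg hiS'] at hPi; exact absurd hPi.symm hjj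
          · rintro ⟨hiS', hPi⟩
            exact ⟨hS'sub hiS', by rw [hP]; simp [if_pos hiS', hPi]⟩
        rwa [hfe] at hj1
    -- choice of N for each subset
    have hchoice : ∀ S' : Finset (Fin k), ∃ N' : ℕ, Hyp R S' J' →
        ∀ ℓ : Fin d → ℕ, (∀ j ∈ J', N' ≤ ℓ j) →
        (∀ j ∉ J', (S'.lcm fun i => R i j) ∣ ℓ j) → TiledByBoxes R ℓ := by
      intro S'
      by_cases h : Hyp R S' J'
      · obtain ⟨N', hN'⟩ := IH J' hJ'card S' h
        exact ⟨N', fun _ => hN'⟩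
      · exact ⟨0, fun h' => absurd h' h⟩
    choose f hf using hchoice
    set BB : Finset (Finset (Fin k)) := S.powerset.filter (fun S' => Hyp R S' J') with hBB
    set F : Finset ℕ := BB.image (fun S' => S'.lcm (fun i => R i j₀)) with hF
    have hFgcd : F.gcd id = 1 := by
      by_contra hne
      obtain ⟨p, hp, hpdvd⟩ := Nat.exists_prime_and_dvd hne
      have hpall : ∀ m ∈ F, p ∣ m := fun m hm => hpdvd.trans (Finset.gcd_dvd (f := id) hm)
      set Sstar : Finset (Fin k) := S.filter (fun i => ¬ p ∣ R i j₀) with hSstar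
      by_cases hstar : Hyp R Sstar J'
      · have hmem : Sstar.lcm (fun i => R i j₀) ∈ F := by
          rw [hF]
          exact Finset.mem_image_of_mem _ (by
            rw [hBB, Finset.mem_filter, Finset.mem_powerset]
            exact ⟨Finset.filter_subset _ _, hstar⟩)
        obtain ⟨i, hiSstar, hpi⟩ := prime_dvd_lcm hp Sstar (fun i => R i j₀)
          (hpall _ hmem)
        exact (Finset.mem_filter.1 hiSstar).2 hpi
      · have hg1 := dich Sstar (Finset.filter_subset _ _) hstar
        have hpg : p ∣ (S \ Sstar).gcd fun i => R i j₀ := by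
          apply Finset.dvd_gcd
          intro i hi
          rw [Finset.mem_sdiff, hSstar, Finset.mem_filter] at hi
          by_contra hnd
          exact hi.2 ⟨hi.1, hnd⟩
        rw [hg1] at hpg
        exact hp.ne_one (Nat.dvd_one.1 hpg)
    obtain ⟨Nf, hNf⟩ := frobenius_closure F hFgcd
    set N : ℕ := max Nf (BB.sup f) with hN
    refine ⟨N, fun ℓ hbig hdvd => ?_⟩
    have key : ∀ m, m ∈ AddSubmonoid.closure (F : Set ℕ) →
        TiledByBoxes R (Function.update ℓ j₀ m) := by
      intro m hm
      induction hm using AddSubmonoid.closure_induction with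
      | mem x hx =>
        obtain ⟨S', hS'BB, rfl⟩ := by
          rw [hF] at hx
          simpa using hx
        rw [hBB, Finset.mem_filter, Finset.mem_powerset] at hS'BB
        obtain ⟨hS'sub, hS'Hyp⟩ := hS'BB
        apply hf S' hS'Hyp
        · intro j hjJ'
          have hjne : j ≠ j₀ := (Finset.mem_erase.1 hjJ').1
          rw [Function.update_of_ne hjne]
          have h1 : f S' ≤ BB.sup f := Finset.le_sup (by
            rw [hBB, Finset.mem_filter, Finset.mem_powerset]; exact ⟨hS'sub, hS'Hyp⟩)
          have h2 := hbig j (Finset.mem_of_mem_erase hjJ')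
          omega
        · intro j hjJ'
          by_cases hjj : j = j₀
          · subst hjj
            rw [Function.update_self]
          · rw [Function.update_of_ne hjj]
            have hjJ : j ∉ J := fun hjJ => hjJ' (Finset.mem_erase.2 ⟨hjj, hjJ⟩)
            exact (Finset.lcm_dvd fun i hi => Finset.dvd_lcm (hS'sub hi)).trans (hdvd j hjJ)
      | zero => exact tiled_of_zero _ j₀ (Function.update_self _ _ _)
      | add x y hx hy ihx ihy => exact tiled_stack j₀ ℓ x y ihx ihy
    have := key (ℓ j₀) (hNf _ (le_trans (le_max_left _ _) (hbig j₀ hj₀)))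
    rwa [Function.update_eq_self] at this
end main


/-- Let `𝓡 = {R 0, …, R (k-1)}` be a finite collection of `d`-dimensional
boxes with positive integer sidelengths. If for every partition of `𝓡` into `d` (possibly
empty) parts `A₁ ⊔ ⋯ ⊔ A_d` there is some `j` with `gcd (n_j(R) : R ∈ A_j) = 1` (the gcd
of the empty set being `0`), then there is `k₀` such that every box all of whose sidelengths
are at least `k₀` can be tiled by translates of boxes from `𝓡`. -/
theorem tiles_all_large_boxes (d k : ℕ) (hd : 0 < d) (R : Fin k → Fin d → ℕ)
    (hpos : ∀ i j, 0 < R i j)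
    (hgcd : ∀ P : Fin k → Fin d, ∃ j : Fin d,
      (Finset.univ.filter fun i => P i = j).gcd (fun i => R i j) = 1) :
    ∃ k₀ : ℕ, ∀ ℓ : Fin d → ℕ, (∀ j, k₀ ≤ ℓ j) → TiledByBoxes R ℓ := by
  have hHyp : Hyp R Finset.univ Finset.univ := by
    intro P _
    obtain ⟨j, hj⟩ := hgcd P
    exact ⟨j, Finset.mem_univ j, hj⟩
  obtain ⟨N, hN⟩ := main_induction hd hpos (Finset.univ : Finset (Fin d)).card
    Finset.univ le_rfl Finset.univ hHyp
  exact ⟨N, fun ℓ hℓ => hN ℓ (fun j _ => hℓ j) (fun j hj => absurd (Finset.mem_univ j) hj)⟩
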